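/- Let Y₁ = Y₀ + Δ with Y₀ absolutely continuous with finite mean, and let R₁, R₀ be missingness indicators each independent of the respective outcome (MCAR) with equal missingness probability p < α in both arms. Define composite outcomes U_a equal to Y_a if R_a = 1 and to a constant below the essential infimum of Y_a otherwise. Then the difference of composite trimmed means at level α equals Δ: E[U₁ | U₁ > F_{U₁}^{-1}(α)] − E[U₀ | U₀ > F_{U₀}^{-1}(α)] = Δ. -/

import Mathlib

open MeasureTheory ProbabilityTheory Set
open Filter

noncomputable def quant (F : ℝ → ℝ) (α : ℝ) : ℝ := sInf {x | α ≤ F x}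

lemma quant_shift (F : ℝ → ℝ) (β Δ : ℝ) (hne : {x | β ≤ F x}.Nonempty)
    (hbdd : BddBelow {x | β ≤ F x}) :
    quant (fun x => F (x - Δ)) β = quant F β + Δ := by
  have himg : {x | β ≤ F (x - Δ)} = (OrderIso.addRight Δ) '' {x | β ≤ F x} := by
    ext x
    simp only [mem_image, mem_setOf_eq, OrderIso.addRight_apply]
    constructor
    · intro h; exact ⟨x - Δ, h, sub_add_cancel x Δ⟩
    · rintro ⟨y, hy, rfl⟩; simpa using hy
  rw [quant, quant, himg, ← OrderIso.map_csInf' (OrderIso.addRight Δ) hne hbdd,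
    OrderIso.addRight_apply]

noncomputable def condMeanAbove {Ω : Type*} [MeasurableSpace Ω]
    (μ : Measure Ω) (X : Ω → ℝ) (q : ℝ) : ℝ :=
  (∫ ω in {ω | q < X ω}, X ω ∂μ) / (μ {ω | q < X ω}).toReal

lemma arm_condMean {Ω : Type*} [MeasurableSpace Ω] (μ : Measure Ω) [IsProbabilityMeasure μ]
    (Y : Ω → ℝ) (R : Ω → Bool) (p α c : ℝ)
    (hYm : Measurable Y) (hRm : Measurable R)
    (hYint : Integrable Y μ) (hindep : IndepFun Y R μ)
    (hp : (μ {ω | R ω = false}).toReal = p)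
    (hα : α ∈ Ioo (0:ℝ) 1) (hpα : p < α)
    (hc : ∀ᵐ ω ∂μ, c < Y ω)
    (hatom : ∀ x, μ {ω | Y ω = x} = 0)
    (hne : ∃ x, (α - p)/(1 - p) ≤ (μ {ω | Y ω ≤ x}).toReal)
    (U : Ω → ℝ) (hU : U = fun ω => if R ω then Y ω else c)
    (FU : ℝ → ℝ) (hFU : FU = fun x => (μ {ω | U ω ≤ x}).toReal) :
    (μ {ω | quant (fun x => (μ {ω | Y ω ≤ x}).toReal) ((α - p)/(1 - p)) < Y ω}).toReal
      = 1 - (α - p)/(1 - p) ∧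
    condMeanAbove μ U (quant FU α)
      = (∫ ω in {ω | quant (fun x => (μ {ω | Y ω ≤ x}).toReal) ((α - p)/(1 - p)) < Y ω}, Y ω ∂μ)
        / (1 - (α - p)/(1 - p)) := by
  have hp0 : 0 ≤ p := hp ▸ ENNReal.toReal_nonneg
  have hp1 : p < 1 := hpα.trans hα.2
  have h1p : 0 < 1 - p := by linarith
  set α' : ℝ := (α - p)/(1 - p) with hα'
  have hα'pos : 0 < α' := div_pos (by linarith) h1p
  have hα'lt1 : α' < 1 := (div_lt_one h1p).2 (by linarith [hα.2])
  set F : ℝ → ℝ := fun x => (μ {ω | Y ω ≤ x}).toReal with hF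
  set S : Set ℝ := {x | α' ≤ F x} with hS
  set q : ℝ := sInf S with hqdef
  have hquantF : quant F α' = q := rfl
  have mYle : ∀ x : ℝ, MeasurableSet {ω | Y ω ≤ x} := fun x => hYm measurableSet_Iic
  have hc0 : μ {ω | ¬ c < Y ω} = 0 := ae_iff.1 hc
  have hFzero : ∀ x, x < c → μ {ω | Y ω ≤ x} = 0 := by
    intro x hx
    exact measure_mono_null (fun ω (h : Y ω ≤ x) => by simp only [mem_setOf_eq]; linarith) hc0
  have hFc : μ {ω | Y ω ≤ c} = 0 :=
    measure_mono_null (fun ω (h : Y ω ≤ c) => by simp only [mem_setOf_eq]; linarith) hc0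
  have hSne : S.Nonempty := hne
  have hSlb : ∀ x ∈ S, c ≤ x := by
    intro x hx
    by_contra hcx
    push_neg at hcx
    have : F x = 0 := by simp [hF, hFzero x hcx]
    rw [hS, mem_setOf_eq, this] at hx
    linarith
  have hSbdd : BddBelow S := ⟨c, hSlb⟩
  have hcq : c ≤ q := le_csInf hSne hSlb
  -- α' ≤ F q
  have key1 : ENNReal.ofReal α' ≤ μ {ω | Y ω ≤ q} := by
    have hanti : Antitone (fun n : ℕ => {ω | Y ω ≤ q + 1/(n+1)}) := by
      intro m n hmn ω (h : Y ω ≤ _)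
      have h1 : (1:ℝ)/(n+1) ≤ 1/(m+1) := by
        apply one_div_le_one_div_of_le (by positivity)
        have := (Nat.cast_le (α := ℝ)).2 hmn; linarith
      simp only [mem_setOf_eq]
      linarith
    have hInter : (⋂ n : ℕ, {ω | Y ω ≤ q + 1/(n+1)}) = {ω | Y ω ≤ q} := by
      ext ω
      simp only [mem_iInter, mem_setOf_eq]
      constructor
      · intro h
        by_contra hgt
        push_neg at hgt
        obtain ⟨n, hn⟩ := exists_nat_one_div_lt (sub_pos.2 hgt)
        have := h n
        linarith
      · intro h n
        have : (0:ℝ) < 1/(n+1) := by positivity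
        linarith
    have ht := tendsto_measure_iInter_atTop (μ := μ)
      (fun n => (mYle _).nullMeasurableSet) hanti ⟨0, measure_ne_top μ _⟩
    rw [hInter] at ht
    refine ge_of_tendsto ht (Eventually.of_forall fun n => ?_)
    have hpos : (0:ℝ) < 1/(n+1) := by positivity
    obtain ⟨x, hxS, hxlt⟩ := exists_lt_of_csInf_lt hSne (lt_add_of_pos_right q hpos)
    calc ENNReal.ofReal α' ≤ μ {ω | Y ω ≤ x} := ENNReal.ofReal_le_of_le_toReal hxS
      _ ≤ μ {ω | Y ω ≤ q + 1/(n+1)} :=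
        measure_mono fun ω (h : Y ω ≤ x) => by simp only [mem_setOf_eq]; linarith [hxlt]
  -- F q ≤ α'
  have key2 : μ {ω | Y ω ≤ q} ≤ ENNReal.ofReal α' := by
    have hmono : Monotone (fun n : ℕ => {ω | Y ω ≤ q - 1/(n+1)}) := by
      intro m n hmn ω (h : Y ω ≤ _)
      have h1 : (1:ℝ)/(n+1) ≤ 1/(m+1) := by
        apply one_div_le_one_div_of_le (by positivity)
        have := (Nat.cast_le (α := ℝ)).2 hmn; linarith
      simp only [mem_setOf_eq]
      linarith
    have hUnion : (⋃ n : ℕ, {ω | Y ω ≤ q - 1/(n+1)}) = {ω | Y ω < q} := by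
      ext ω
      simp only [mem_iUnion, mem_setOf_eq]
      constructor
      · rintro ⟨n, hn⟩
        have : (0:ℝ) < 1/(n+1) := by positivity
        linarith
      · intro h
        obtain ⟨n, hn⟩ := exists_nat_one_div_lt (sub_pos.2 h)
        exact ⟨n, by linarith⟩
    have ht := tendsto_measure_iUnion_atTop (μ := μ) hmono
    rw [hUnion] at ht
    have hlt : μ {ω | Y ω < q} ≤ ENNReal.ofReal α' := by
      refine le_of_tendsto ht (Eventually.of_forall fun n => ?_)
      have hpos : (0:ℝ) < 1/(n+1) := by positivity
      have hnot : q - 1/(n+1) ∉ S := notMem_of_lt_csInf (by linarith) hSbdd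
      have hFlt : F (q - 1/(n+1)) < α' := by
        by_contra hge; push_neg at hge; exact hnot hge
      calc μ {ω | Y ω ≤ q - 1/(n+1)}
          = ENNReal.ofReal (F (q - 1/(n+1))) := by
            rw [hF]; exact (ENNReal.ofReal_toReal (measure_ne_top μ _)).symm
        _ ≤ ENNReal.ofReal α' := ENNReal.ofReal_le_ofReal hFlt.le
    have hsplit : μ {ω | Y ω ≤ q} ≤ μ {ω | Y ω < q} + μ {ω | Y ω = q} := by
      refine le_trans (measure_mono fun ω (h : Y ω ≤ q) => ?_) (measure_union_le _ _)
      rcases lt_or_eq_of_le h with h' | h'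
      · exact Or.inl h'
      · exact Or.inr h'
    rw [hatom q, add_zero] at hsplit
    exact hsplit.trans hlt
  have hFq : F q = α' := by
    refine le_antisymm (ENNReal.toReal_le_of_le_ofReal hα'pos.le key2) ?_
    have := ENNReal.toReal_mono (measure_ne_top μ _) key1
    rwa [ENNReal.toReal_ofReal hα'pos.le] at this
  have hqc : c < q := by
    rcases eq_or_lt_of_le hcq with h | h
    · exfalso
      have : F q = 0 := by
        show (μ {ω | Y ω ≤ q}).toReal = 0
        rw [← h, hFc, ENNReal.toReal_zero]
      rw [this] at hFq; linarith
    · exact h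
  -- measure above q
  have hcomp : {ω | q < Y ω} = {ω | Y ω ≤ q}ᶜ := by
    ext ω; simp [not_le]
  have hμgt : (μ {ω | q < Y ω}).toReal = 1 - α' := by
    rw [hcomp, measure_compl (mYle q) (measure_ne_top μ _), measure_univ,
      ENNReal.toReal_sub_of_le (by simpa using prob_le_one) ENNReal.one_ne_top]
    rw [ENNReal.toReal_one, show (μ {ω | Y ω ≤ q}).toReal = α' from hFq]
  refine ⟨hμgt, ?_⟩
  -- independence on preimages
  have hind := indepFun_iff_measure_inter_preimage_eq_mul.1 hindep
  have mRt : MeasurableSet {ω | R ω = true} := hRm (measurableSet_singleton true)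
  have mRf : MeasurableSet {ω | R ω = false} := hRm (measurableSet_singleton false)
  have hcompR : {ω | R ω = true} = {ω | R ω = false}ᶜ := by
    ext ω; cases h : R ω <;> simp [h]
  have hμRt : (μ {ω | R ω = true}).toReal = 1 - p := by
    rw [hcompR, measure_compl mRf (measure_ne_top μ _), measure_univ,
      ENNReal.toReal_sub_of_le prob_le_one ENNReal.one_ne_top, ENNReal.toReal_one, hp]
  -- formula for FU above c
  have hFUx : ∀ x, c ≤ x → FU x = F x * (1 - p) + p := by
    intro x hcx
    have hUset : {ω | U ω ≤ x}
        = ({ω | Y ω ≤ x} ∩ {ω | R ω = true}) ∪ {ω | R ω = false} := by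
      ext ω; cases h : R ω <;> simp [hU, h, hcx]
    have hdisj : Disjoint ({ω | Y ω ≤ x} ∩ {ω | R ω = true}) {ω | R ω = false} := by
      rw [Set.disjoint_left]
      rintro ω ⟨-, h1⟩ h2
      simp only [mem_setOf_eq] at h1 h2
      rw [h1] at h2; exact Bool.noConfusion h2
    have hmeas : μ {ω | U ω ≤ x}
        = μ {ω | Y ω ≤ x} * μ {ω | R ω = true} + μ {ω | R ω = false} := by
      rw [hUset, measure_union hdisj mRf]
      congr 1
      exact hind (Iic x) {true} measurableSet_Iic (measurableSet_singleton true)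
    rw [hFU]
    show (μ {ω | U ω ≤ x}).toReal = F x * (1 - p) + p
    rw [hmeas, ENNReal.toReal_add (ENNReal.mul_ne_top (measure_ne_top μ _) (measure_ne_top μ _))
      (measure_ne_top μ _), ENNReal.toReal_mul, hμRt, hp]
  have hFUx0 : ∀ x, x < c → FU x = 0 := by
    intro x hxc
    have hsub : {ω | U ω ≤ x} ⊆ {ω | Y ω ≤ x} := by
      intro ω h
      simp only [hU, mem_setOf_eq] at h ⊢
      by_cases hr : R ω
      · rwa [if_pos hr] at h
      · rw [if_neg hr] at h; linarith
    rw [hFU]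
    show (μ {ω | U ω ≤ x}).toReal = 0
    rw [measure_mono_null hsub (hFzero x hxc), ENNReal.toReal_zero]
  have hSFU : {x | α ≤ FU x} = S := by
    ext x
    simp only [mem_setOf_eq, hS]
    constructor
    · intro hx
      rcases lt_or_ge x c with hxc | hxc
      · rw [hFUx0 x hxc] at hx; linarith [hα.1]
      · rw [hFUx x hxc] at hx
        show α' ≤ F x
        rw [hα', div_le_iff₀ h1p]; linarith
    · intro hx
      have hFx : α' ≤ F x := hx
      have hxc : c ≤ x := by
        by_contra hcx; push_neg at hcx
        have hF0 : F x = 0 := by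
          show (μ {ω | Y ω ≤ x}).toReal = 0
          rw [hFzero x hcx, ENNReal.toReal_zero]
        rw [hF0] at hFx; linarith
      rw [hFUx x hxc]
      have h2 : α' * (1 - p) ≤ F x * (1 - p) := by nlinarith
      rw [hα', div_mul_cancel₀ _ (ne_of_gt h1p)] at h2
      linarith
  have hquantFU : quant FU α = q := by rw [quant, hSFU]
  -- the conditioning event
  set B : Set Ω := {ω | q < Y ω} ∩ {ω | R ω = true} with hB
  have mB : MeasurableSet B := (hYm measurableSet_Ioi).inter mRt
  have hAB : {ω | quant FU α < U ω} = B := by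
    rw [hquantFU]
    ext ω
    simp only [hB, mem_setOf_eq, mem_inter_iff, hU]
    by_cases hr : R ω
    · simp [hr]
    · simp only [hr, if_false, Bool.false_eq_true, and_false, iff_false]
      intro h; exact absurd (h.trans hqc) (lt_irrefl _)
  have hμB : (μ B).toReal = (1 - α') * (1 - p) := by
    have h := hind (Ioi q) {true} measurableSet_Ioi (measurableSet_singleton true)
    have hBm : μ B = μ {ω | q < Y ω} * μ {ω | R ω = true} := h
    rw [hBm, ENNReal.toReal_mul, hμgt, hμRt]
  -- integrability of the truncations
  have hgm : Measurable (fun y : ℝ => if q < y then y else 0) :=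
    Measurable.ite measurableSet_Ioi measurable_id measurable_const
  have hbm : Measurable (fun b : Bool => if b then (1:ℝ) else 0) := Measurable.of_discrete
  have hint_g : Integrable (fun ω => if q < Y ω then Y ω else 0) μ := by
    refine Integrable.mono (hYint.abs.add (integrable_const |q|))
      ((hgm.comp hYm).aestronglyMeasurable) (Eventually.of_forall fun ω => ?_)
    simp only [Real.norm_eq_abs, Pi.add_apply]
    rw [abs_of_nonneg (by positivity : (0:ℝ) ≤ |Y ω| + |q|)]
    by_cases hy : q < Y ω
    · rw [if_pos hy]; linarith [abs_nonneg q]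
    · rw [if_neg hy, abs_zero]; positivity
  have hint_b : Integrable (fun ω => if R ω then (1:ℝ) else 0) μ := by
    refine Integrable.mono' (integrable_const 1) ((hbm.comp hRm).aestronglyMeasurable)
      (Eventually.of_forall fun ω => ?_)
    by_cases hr : R ω <;> simp [hr]
  have hindcomp : IndepFun (fun ω => if q < Y ω then Y ω else 0)
      (fun ω => if R ω then (1:ℝ) else 0) μ := hindep.comp hgm hbm
  have hmul := IndepFun.integral_mul_eq_mul_integral hindcomp hint_g.aestronglyMeasurable hint_b.aestronglyMeasurable
  have mgt : MeasurableSet {ω | q < Y ω} := hYm measurableSet_Ioi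
  have h1 : ∫ ω, (if q < Y ω then Y ω else 0) ∂μ = ∫ ω in {ω | q < Y ω}, Y ω ∂μ := by
    rw [← integral_indicator mgt]
    congr 1
  have h2 : ∫ ω, (if R ω then (1:ℝ) else 0) ∂μ = 1 - p := by
    have : (fun ω => if R ω then (1:ℝ) else 0)
        = Set.indicator {ω | R ω = true} (fun _ => (1:ℝ)) := by
      ext ω; by_cases hr : R ω <;> simp [hr, indicator]
    rw [this, integral_indicator_const (1:ℝ) mRt, smul_eq_mul, mul_one, measureReal_def, hμRt]
  have h3 : ∫ ω in {ω | quant FU α < U ω}, U ω ∂μ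
      = ∫ ω, (if q < Y ω then Y ω else 0) * (if R ω then (1:ℝ) else 0) ∂μ := by
    rw [hAB, ← integral_indicator mB]
    congr 1
    ext ω
    by_cases hr : R ω <;> by_cases hy : q < Y ω <;>
      simp [hU, hB, hr, hy, indicator, mem_inter_iff, mem_setOf_eq]
  have hnum : ∫ ω in {ω | quant FU α < U ω}, U ω ∂μ
      = (∫ ω in {ω | q < Y ω}, Y ω ∂μ) * (1 - p) := by
    rw [h3]
    have : (fun ω => (if q < Y ω then Y ω else 0) * (if R ω then (1:ℝ) else 0))
        = (fun ω => if q < Y ω then Y ω else 0) * (fun ω => if R ω then (1:ℝ) else 0) := rfl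
    rw [this, hmul, h1, h2]
  show (∫ ω in {ω | quant FU α < U ω}, U ω ∂μ) / (μ {ω | quant FU α < U ω}).toReal
      = (∫ ω in {ω | q < Y ω}, Y ω ∂μ) / (1 - α')
  have hp' : (1:ℝ) - p ≠ 0 := ne_of_gt h1p
  have hα'' : (1:ℝ) - α' ≠ 0 := ne_of_gt (by linarith)
  rw [hnum, hAB, hμB]
  field_simp

theorem stmt16 {Ω : Type*} [MeasurableSpace Ω] (μ : Measure Ω) [IsProbabilityMeasure μ]
    (Y₀ : Ω → ℝ) (Δ : ℝ) (Y₁ : Ω → ℝ) (hY₁def : Y₁ = fun ω => Y₀ ω + Δ)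
    (R₁ R₀ : Ω → Bool) (f₀ : ℝ → ℝ) (α p c₁ c₀ : ℝ)
    (hY₀ : Measurable Y₀) (hR₁ : Measurable R₁) (hR₀ : Measurable R₀)
    (hf₀0 : ∀ y, 0 ≤ f₀ y)
    (hY₀d : ∀ x, μ {ω | Y₀ ω ≤ x} = ENNReal.ofReal (∫ y in Iic x, f₀ y))
    (hmean : Integrable (fun y => y * f₀ y))
    (hindep₁ : IndepFun Y₁ R₁ μ) (hindep₀ : IndepFun Y₀ R₀ μ)
    (hp₁ : (μ {ω | R₁ ω = false}).toReal = p)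
    (hp₀ : (μ {ω | R₀ ω = false}).toReal = p)
    (hα : α ∈ Ioo (0:ℝ) 1) (hpα : p < α)
    (hc₁ : ∀ᵐ ω ∂μ, c₁ < Y₁ ω) (hc₀ : ∀ᵐ ω ∂μ, c₀ < Y₀ ω)
    (U₁ U₀ : Ω → ℝ)
    (hU₁ : U₁ = fun ω => if R₁ ω then Y₁ ω else c₁)
    (hU₀ : U₀ = fun ω => if R₀ ω then Y₀ ω else c₀)
    (FU₁ FU₀ : ℝ → ℝ)
    (hFU₁ : FU₁ = fun x => (μ {ω | U₁ ω ≤ x}).toReal)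
    (hFU₀ : FU₀ = fun x => (μ {ω | U₀ ω ≤ x}).toReal) :
    condMeanAbove μ U₁ (quant FU₁ α) - condMeanAbove μ U₀ (quant FU₀ α) = Δ := by
  have hp0 : 0 ≤ p := hp₀ ▸ ENNReal.toReal_nonneg
  have hp1 : p < 1 := hpα.trans hα.2
  have h1p : 0 < 1 - p := by linarith
  set α' : ℝ := (α - p)/(1 - p) with hα'
  have hα'pos : 0 < α' := div_pos (by linarith) h1p
  have hα'lt1 : α' < 1 := (div_lt_one h1p).2 (by linarith [hα.2])
  -- measurability of the density (a.e.)
  have haef : AEMeasurable f₀ (volume : Measure ℝ) := by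
    have h1 : AEMeasurable (fun y => y * f₀ y) (volume : Measure ℝ) := hmean.aemeasurable
    have h2 : AEMeasurable (fun y : ℝ => y⁻¹ * (y * f₀ y)) (volume : Measure ℝ) :=
      (measurable_inv.aemeasurable).mul h1
    refine h2.congr ?_
    have h0 : ∀ᵐ y : ℝ ∂(volume : Measure ℝ), y ≠ 0 := by
      refine ae_iff.2 ?_
      have : {y : ℝ | ¬ y ≠ 0} = {0} := by ext y; simp
      rw [this, Real.volume_singleton]
    filter_upwards [h0] with y hy
    field_simp
  -- integrability of the density on left rays
  have hIntIic : ∀ x : ℝ, IntegrableOn f₀ (Iic x) (volume : Measure ℝ) := by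
    by_contra hcon
    push_neg at hcon
    obtain ⟨x, hx⟩ := hcon
    have hzero : ∀ y : ℝ, x ≤ y → μ {ω | Y₀ ω ≤ y} = 0 := by
      intro y hy
      have hni : ¬ IntegrableOn f₀ (Iic y) (volume : Measure ℝ) :=
        fun h => hx (h.mono_set (Iic_subset_Iic.2 hy))
      rw [hY₀d y, integral_undef hni, ENNReal.ofReal_zero]
    have huniv : (⋃ n : ℕ, {ω | Y₀ ω ≤ x + n}) = univ := by
      refine eq_univ_of_forall fun ω => ?_
      obtain ⟨n, hn⟩ := exists_nat_ge (Y₀ ω - x)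
      exact mem_iUnion.2 ⟨n, by simp only [mem_setOf_eq]; linarith⟩
    have hzero' : μ univ = 0 := by
      rw [← huniv]
      exact measure_iUnion_null fun n => hzero _ (le_add_of_nonneg_right (Nat.cast_nonneg n))
    rw [measure_univ] at hzero'
    exact one_ne_zero hzero'
  -- the distribution of Y₀ is the density measure
  set ν : Measure ℝ := volume.withDensity (fun y => ENNReal.ofReal (f₀ y)) with hν
  have hνIic : ∀ x, ν (Iic x) = μ {ω | Y₀ ω ≤ x} := by
    intro x
    rw [hν, withDensity_apply _ measurableSet_Iic, hY₀d x,
      ← ofReal_integral_eq_lintegral_ofReal (hIntIic x)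
        (Eventually.of_forall fun y => hf₀0 y)]
  haveI : IsProbabilityMeasure (Measure.map Y₀ μ) := Measure.isProbabilityMeasure_map hY₀.aemeasurable
  have hmap : Measure.map Y₀ μ = ν := by
    refine Measure.ext_of_Iic (Measure.map Y₀ μ) ν fun a => ?_
    rw [Measure.map_apply hY₀ measurableSet_Iic, hνIic a]
    rfl
  -- no atoms
  have hatom₀ : ∀ x, μ {ω | Y₀ ω = x} = 0 := by
    intro x
    have h1 : μ {ω | Y₀ ω = x} = Measure.map Y₀ μ {x} := by
      rw [Measure.map_apply hY₀ (measurableSet_singleton x)]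
      rfl
    rw [h1, hmap, hν, withDensity_apply _ (measurableSet_singleton x),
      setLIntegral_measure_zero _ _ Real.volume_singleton]
  have hatom₁ : ∀ x, μ {ω | Y₁ ω = x} = 0 := by
    intro x
    have : {ω | Y₁ ω = x} = {ω | Y₀ ω = x - Δ} := by
      ext ω; rw [hY₁def]; simp only [mem_setOf_eq]; constructor <;> intro h <;> linarith
    rw [this]; exact hatom₀ _
  -- integrability of Y₀
  have hYint₀ : Integrable Y₀ μ := by
    have hid : Integrable (fun y : ℝ => y) (Measure.map Y₀ μ) := by
      rw [hmap, hν]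
      have hmk := haef.ae_eq_mk
      rw [withDensity_congr_ae
        (by filter_upwards [hmk] with y hy; rw [hy] :
          (fun y => ENNReal.ofReal (f₀ y)) =ᵐ[(volume : Measure ℝ)]
          fun y => ENNReal.ofReal (haef.mk f₀ y))]
      have hm' : Measurable fun y => ENNReal.ofReal (haef.mk f₀ y) :=
        ENNReal.measurable_ofReal.comp haef.measurable_mk
      rw [integrable_withDensity_iff hm'
        (Eventually.of_forall fun y => ENNReal.ofReal_lt_top)]
      refine hmean.congr ?_
      filter_upwards [hmk] with y hy
      rw [← hy, ENNReal.toReal_ofReal (hf₀0 y)]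
    exact (integrable_map_measure aestronglyMeasurable_id hY₀.aemeasurable).1 hid
  have hYint₁ : Integrable Y₁ μ := by
    rw [hY₁def]; exact hYint₀.add (integrable_const Δ)
  -- nonemptiness of the quantile set for arm 0
  have hne₀ : ∃ x : ℝ, α' ≤ (μ {ω | Y₀ ω ≤ x}).toReal := by
    have hmono : Monotone (fun n : ℕ => {ω | Y₀ ω ≤ (n:ℝ)}) := by
      intro m n hmn ω (h : Y₀ ω ≤ _)
      simp only [mem_setOf_eq]
      exact h.trans (Nat.cast_le.2 hmn)
    have huniv : (⋃ n : ℕ, {ω | Y₀ ω ≤ (n:ℝ)}) = univ := by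
      refine eq_univ_of_forall fun ω => ?_
      obtain ⟨n, hn⟩ := exists_nat_ge (Y₀ ω)
      exact mem_iUnion.2 ⟨n, hn⟩
    have ht := tendsto_measure_iUnion_atTop (μ := μ) hmono
    rw [huniv, measure_univ] at ht
    have hlt : ENNReal.ofReal α' < 1 := by
      rw [← ENNReal.ofReal_one]
      exact ENNReal.ofReal_lt_ofReal_iff one_pos |>.2 hα'lt1
    obtain ⟨n, hn⟩ := (ht.eventually (lt_mem_nhds hlt)).exists
    refine ⟨n, ?_⟩
    have := ENNReal.toReal_mono (measure_ne_top μ _) hn.le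
    rwa [ENNReal.toReal_ofReal hα'pos.le] at this
  -- CDF of arm 1 is the shifted CDF of arm 0
  have hsets : ∀ x : ℝ, {ω | Y₁ ω ≤ x} = {ω | Y₀ ω ≤ x - Δ} := by
    intro x; ext ω; rw [hY₁def]; simp only [mem_setOf_eq]
    constructor <;> intro h <;> linarith
  have hne₁ : ∃ x : ℝ, α' ≤ (μ {ω | Y₁ ω ≤ x}).toReal := by
    obtain ⟨x, hx⟩ := hne₀
    exact ⟨x + Δ, by rw [hsets]; simpa using hx⟩
  -- apply the per-arm lemma
  obtain ⟨hμ₀, hcm₀⟩ := arm_condMean μ Y₀ R₀ p α c₀ hY₀ hR₀ hYint₀ hindep₀ hp₀ hα hpα hc₀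
    hatom₀ hne₀ U₀ hU₀ FU₀ hFU₀
  have hY₁m : Measurable Y₁ := by rw [hY₁def]; exact hY₀.add_const Δ
  obtain ⟨hμ₁, hcm₁⟩ := arm_condMean μ Y₁ R₁ p α c₁ hY₁m hR₁ hYint₁ hindep₁ hp₁ hα hpα hc₁
    hatom₁ hne₁ U₁ hU₁ FU₁ hFU₁
  set F₀ : ℝ → ℝ := fun x => (μ {ω | Y₀ ω ≤ x}).toReal with hF₀
  set q₀ : ℝ := quant F₀ α' with hq₀
  -- the arm-1 quantile is the shifted arm-0 quantile
  have hS₀bdd : BddBelow {x | α' ≤ F₀ x} := by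
    refine ⟨c₀, fun x hx => ?_⟩
    by_contra hcx
    push_neg at hcx
    have h0 : μ {ω | Y₀ ω ≤ x} = 0 :=
      measure_mono_null (fun ω (h : Y₀ ω ≤ x) => by
        simp only [mem_setOf_eq]; intro hlt; linarith) (ae_iff.1 hc₀)
    have : F₀ x = 0 := by show (μ {ω | Y₀ ω ≤ x}).toReal = 0; rw [h0, ENNReal.toReal_zero]
    rw [mem_setOf_eq, this] at hx
    linarith
  have hq₁ : quant (fun x => (μ {ω | Y₁ ω ≤ x}).toReal) α' = q₀ + Δ := by
    have hfun : (fun x => (μ {ω | Y₁ ω ≤ x}).toReal) = fun x => F₀ (x - Δ) := by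
      funext x; rw [hsets x]
    rw [hfun, quant_shift F₀ α' Δ hne₀ hS₀bdd]
  -- identify the two conditioning events
  have hsetq : {ω | quant (fun x => (μ {ω | Y₁ ω ≤ x}).toReal) α' < Y₁ ω} = {ω | q₀ < Y₀ ω} := by
    rw [hq₁]
    ext ω; rw [hY₁def]; simp only [mem_setOf_eq]
    constructor <;> intro h <;> linarith
  rw [hcm₀, hcm₁, hsetq]
  have hint : ∫ ω in {ω | q₀ < Y₀ ω}, Y₁ ω ∂μ
      = (∫ ω in {ω | q₀ < Y₀ ω}, Y₀ ω ∂μ) + Δ * (1 - α') := by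
    rw [hY₁def]
    rw [integral_add (hYint₀.restrict) (integrable_const Δ)]
    rw [setIntegral_const Δ]
    rw [measureReal_def, hμ₀, smul_eq_mul]
    ring
  rw [hint]
  have hα'' : (1:ℝ) - α' ≠ 0 := ne_of_gt (by linarith)
  rw [div_sub_div_same, add_sub_cancel_left, mul_div_cancel_right₀ _ hα'']
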